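/- The formal power series φ(1/2; x) = ∑_{k≥1} (x^k/k!) ∏_{a=1}^{k-1}(k/2 - a) satisfies φ(1/2; x) = -2i·arcsin(ix/2) as analytic functions near x = 0; equivalently, the real power series identity φ(1/2; x) = 2·arcsinh(x/2) holds, where arcsinh(y) = log(y + √(1+y²)). -/

import Mathlib

open Real Finset

noncomputable def dcoef (n : ℕ) : ℝ := (-1)^n * (Nat.centralBinom n : ℝ) / 4^n

lemma centralBinom_le_four_pow (n : ℕ) : Nat.centralBinom n ≤ 4^n := by
  induction n with
  | zero => simp
  | succ n ih =>
    have h := Nat.succ_mul_centralBinom_succ n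
    have h2 : (n+1) * Nat.centralBinom (n+1) ≤ (n+1) * (4 * 4^n) := by
      rw [h]
      calc 2*(2*n+1)*Nat.centralBinom n ≤ (4*(n+1)) * 4^n :=
            Nat.mul_le_mul (by omega) ih
        _ = (n+1)*(4*4^n) := by ring
    have := Nat.le_of_mul_le_mul_left h2 (Nat.succ_pos n)
    simpa [pow_succ, mul_comm] using this

lemma abs_dcoef_le_one (n : ℕ) : |dcoef n| ≤ 1 := by
  have h4 : (0:ℝ) < 4^n := by positivity
  have hb : (Nat.centralBinom n : ℝ) ≤ 4^n := by
    exact_mod_cast centralBinom_le_four_pow n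
  rw [dcoef, abs_div, abs_mul, abs_pow, abs_neg, abs_one, one_pow, one_mul,
    Nat.abs_cast, abs_pow, abs_of_pos (by norm_num : (0:ℝ) < 4)]
  rw [div_le_one h4]
  exact hb

lemma dcoef_rec (n : ℕ) : ((n:ℝ)+1) * dcoef (n+1) = -((2*(n:ℝ)+1)/2) * dcoef n := by
  have h := Nat.succ_mul_centralBinom_succ n
  have key : ((n:ℝ)+1) * (Nat.centralBinom (n+1) : ℝ)
      = 2*(2*(n:ℝ)+1)*(Nat.centralBinom n : ℝ) := by exact_mod_cast h
  have h4 : (4:ℝ)^n ≠ 0 := by positivity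
  simp only [dcoef, pow_succ]
  linear_combination (-(-1:ℝ)^n / ((4:ℝ)^n * 4)) * key

noncomputable def sfun (t : ℝ) : ℝ := ∑' n : ℕ, dcoef n * t^n

noncomputable def sderiv (t : ℝ) : ℝ := ∑' n : ℕ, ((n:ℝ)+1) * dcoef (n+1) * t^n

lemma summable_sfun {t : ℝ} (ht : |t| < 1) : Summable (fun n : ℕ => dcoef n * t^n) := by
  apply Summable.of_norm_bounded (summable_geometric_of_lt_one (abs_nonneg t) ht)
  intro n
  rw [norm_mul, norm_pow]
  calc ‖dcoef n‖ * ‖t‖^n ≤ 1 * ‖t‖^n := by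
        apply mul_le_mul_of_nonneg_right (abs_dcoef_le_one n) (by positivity)
    _ = |t|^n := by rw [one_mul]; rfl

lemma summable_n_sfun {t : ℝ} (ht : |t| < 1) :
    Summable (fun n : ℕ => (n:ℝ) * (dcoef n * t^n)) := by
  have hg : Summable (fun n : ℕ => (n:ℝ)^1 * |t|^n) :=
    summable_pow_mul_geometric_of_norm_lt_one 1 (by simpa using ht)
  apply Summable.of_norm_bounded hg
  intro n
  rw [norm_mul, norm_mul, norm_pow, pow_one]
  have : ‖dcoef n‖ * ‖t‖^n ≤ |t|^n := by
    calc ‖dcoef n‖ * ‖t‖^n ≤ 1 * ‖t‖^n :=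
          mul_le_mul_of_nonneg_right (abs_dcoef_le_one n) (by positivity)
      _ = |t|^n := by rw [one_mul]; rfl
  calc ‖(n:ℝ)‖ * (‖dcoef n‖ * ‖t‖^n) ≤ ‖(n:ℝ)‖ * |t|^n :=
        mul_le_mul_of_nonneg_left this (norm_nonneg _)
    _ = (n:ℝ) * |t|^n := by rw [Real.norm_natCast]

lemma summable_sderiv {t : ℝ} (ht : |t| < 1) :
    Summable (fun n : ℕ => ((n:ℝ)+1) * dcoef (n+1) * t^n) := by
  have h := (((summable_n_sfun ht).mul_left (-1)).add ((summable_sfun ht).mul_left (-(1/2))))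
  apply h.congr
  intro n
  have := dcoef_rec n
  have : ((n:ℝ)+1) * dcoef (n+1) * t^n = (-((2*(n:ℝ)+1)/2) * dcoef n) * t^n := by
    rw [dcoef_rec n]
  rw [this]; ring

lemma shift_eq {t : ℝ} (ht : |t| < 1) :
    t * sderiv t = ∑' n : ℕ, (n:ℝ) * (dcoef n * t^n) := by
  rw [sderiv, ← tsum_mul_left]
  rw [Summable.tsum_eq_zero_add (summable_n_sfun ht)]
  simp only [Nat.cast_zero, zero_mul, zero_add, Nat.cast_add, Nat.cast_one]
  exact tsum_congr fun n => by ring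

lemma sderiv_identity {t : ℝ} (ht : |t| < 1) :
    (1 + t) * sderiv t = -(sfun t) / 2 := by
  have hA : sderiv t = -(∑' n : ℕ, (n:ℝ) * (dcoef n * t^n)) - sfun t / 2 := by
    rw [sderiv]
    have step1 : ∀ n : ℕ, ((n:ℝ)+1) * dcoef (n+1) * t^n
        = -((n:ℝ) * (dcoef n * t^n)) - (1/2) * (dcoef n * t^n) := by
      intro n
      have : ((n:ℝ)+1) * dcoef (n+1) * t^n = (-((2*(n:ℝ)+1)/2) * dcoef n) * t^n := by
        rw [dcoef_rec n]
      rw [this]; ring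
    rw [tsum_congr step1, Summable.tsum_sub ((summable_n_sfun ht).neg) ((summable_sfun ht).mul_left (1/2))]
    rw [tsum_neg, tsum_mul_left, sfun]
    ring
  have hshift := shift_eq ht
  have : (1+t) * sderiv t = sderiv t + t * sderiv t := by ring
  rw [this, hshift, hA]
  ring

lemma hasDerivAt_sfun {t : ℝ} (ht : |t| < 1) : HasDerivAt sfun (sderiv t) t := by
  set r : ℝ := (1 + |t|) / 2 with hr
  have hr0 : (0:ℝ) < r := by positivity
  have hr1 : r < 1 := by rw [hr]; linarith
  have hrhalf : (1:ℝ) ≤ 2 * r := by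
    rw [hr]; have := abs_nonneg t; linarith
  have htr : |t| < r := by rw [hr]; linarith
  -- summable bound
  have hu : Summable (fun n : ℕ => (n:ℝ) * r ^ (n-1)) := by
    have hg : Summable (fun n : ℕ => (2:ℝ) * ((n:ℝ)^1 * r^n)) :=
      (summable_pow_mul_geometric_of_norm_lt_one (R := ℝ) 1
        (by rwa [Real.norm_eq_abs, abs_of_pos hr0])).mul_left 2
    apply Summable.of_nonneg_of_le _ _ hg
    · intro n; positivity
    · intro n
      match n with
      | 0 => simp
      | Nat.succ m =>
        have : ((m+1:ℕ):ℝ) * r ^ (m+1-1) = ((m:ℝ)+1) * r^m := by push_cast; ring_nf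
        rw [this]
        have h2 : r ^ m ≤ 2 * r ^ (m+1) := by
          have : r^m = r^m * 1 := by ring
          rw [this, pow_succ]
          calc r^m * 1 ≤ r^m * (2*r) := by
                apply mul_le_mul_of_nonneg_left hrhalf (by positivity)
            _ = 2 * (r^m * r) := by ring
        calc ((m:ℝ)+1) * r^m ≤ ((m:ℝ)+1) * (2 * r^(m+1)) := by
              apply mul_le_mul_of_nonneg_left h2 (by positivity)
          _ = 2 * (((m+1:ℕ):ℝ)^1 * r^(m+1)) := by push_cast; ring
  have key := hasDerivAt_tsum_of_isPreconnected hu Metric.isOpen_ball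
    (convex_ball (0:ℝ) r).isPreconnected
    (g := fun n z => dcoef n * z^n)
    (g' := fun n z => dcoef n * ((n:ℝ) * z^(n-1)))
    (fun n z _ => (hasDerivAt_pow n z).const_mul (dcoef n))
    (fun n z hz => by
      rw [Real.norm_eq_abs, abs_mul, abs_mul, abs_pow]
      have hz' : |z| < r := by simpa [Real.dist_eq] using hz
      calc |dcoef n| * (|(n:ℝ)| * |z|^n.pred.succ.pred) ≤ 1 * ((n:ℝ) * r^(n-1)) := by
            apply mul_le_mul (abs_dcoef_le_one n)
            · apply mul_le_mul (le_of_eq (abs_of_nonneg (Nat.cast_nonneg n)))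
                (pow_le_pow_left₀ (abs_nonneg z) hz'.le _) (by positivity) (Nat.cast_nonneg n)
            · positivity
            · norm_num
        _ = (n:ℝ) * r^(n-1) := by ring)
    (y₀ := t) (by simpa [Real.dist_eq] using htr)
    (summable_sfun ht)
    (by simpa [Real.dist_eq] using htr)
  have hsum : Summable (fun n : ℕ => dcoef n * ((n:ℝ) * t^(n-1))) := by
    apply Summable.of_norm_bounded hu
    intro n
    rw [Real.norm_eq_abs, abs_mul, abs_mul, abs_pow]
    calc |dcoef n| * (|(n:ℝ)| * |t|^(n-1)) ≤ 1 * ((n:ℝ) * r^(n-1)) := by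
          apply mul_le_mul (abs_dcoef_le_one n)
          · apply mul_le_mul (le_of_eq (abs_of_nonneg (Nat.cast_nonneg n)))
              (pow_le_pow_left₀ (abs_nonneg t) htr.le _) (by positivity) (Nat.cast_nonneg n)
          · positivity
          · norm_num
      _ = (n:ℝ) * r^(n-1) := by ring
  have heq : (∑' n : ℕ, dcoef n * ((n:ℝ) * t^(n-1))) = sderiv t := by
    rw [Summable.tsum_eq_zero_add hsum, sderiv]
    simp only [Nat.cast_zero, zero_mul, mul_zero, zero_add]
    exact tsum_congr fun n => by push_cast; ring_nf
  rw [← heq]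
  exact key

lemma sfun_zero : sfun 0 = 1 := by
  rw [sfun, tsum_eq_single 0 (fun n hn => by simp [zero_pow hn])]
  simp [dcoef, Nat.centralBinom]

lemma hasDerivAt_q {z : ℝ} (hz0 : -1 < z) (hz1 : |z| < 1) :
    HasDerivAt (fun w => sfun w * Real.sqrt (1 + w)) 0 z := by
  have hpos : 0 < 1 + z := by linarith
  have hs1 : 0 < Real.sqrt (1 + z) := Real.sqrt_pos.mpr hpos
  have hsqrt : HasDerivAt (fun w => Real.sqrt (1 + w)) (1 / (2 * Real.sqrt (1 + z))) z := by
    have h := (Real.hasDerivAt_sqrt (ne_of_gt hpos)).comp z ((hasDerivAt_id z).const_add 1)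
    simpa [Function.comp_def] using h
  have h := (hasDerivAt_sfun hz1).mul hsqrt
  have hzero : sderiv z * Real.sqrt (1 + z) + sfun z * (1 / (2 * Real.sqrt (1 + z))) = 0 := by
    have hsq : Real.sqrt (1 + z) ^ 2 = 1 + z := Real.sq_sqrt hpos.le
    have hid := sderiv_identity hz1
    have hne : Real.sqrt (1 + z) ≠ 0 := ne_of_gt hs1
    field_simp
    linear_combination 2 * hid + 2 * sderiv z * hsq
  rw [hzero] at h
  exact h

lemma sfun_eq {t : ℝ} (h0 : 0 ≤ t) (h1 : t < 1) : sfun t = (Real.sqrt (1 + t))⁻¹ := by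
  have hmem : ∀ z ∈ Set.Icc (0:ℝ) t, HasDerivAt (fun w => sfun w * Real.sqrt (1 + w)) 0 z := by
    intro z hz
    have : |z| < 1 := by rw [abs_lt]; constructor <;> [linarith [hz.1]; linarith [hz.2]]
    exact hasDerivAt_q (by linarith [hz.1]) this
  have hconst := constant_of_has_deriv_right_zero
    (f := fun w => sfun w * Real.sqrt (1 + w))
    (fun z hz => (hmem z hz).continuousAt.continuousWithinAt)
    (fun z hz => ((hmem z ⟨hz.1, hz.2.le⟩).hasDerivWithinAt))
  have := hconst t (Set.right_mem_Icc.mpr h0)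
  rw [sfun_zero] at this
  simp only [add_zero, Real.sqrt_one, one_mul] at this
  have hs1 : 0 < Real.sqrt (1 + t) := Real.sqrt_pos.mpr (by linarith)
  field_simp
  linarith [this]

noncomputable def cS (n : ℕ) : ℝ := dcoef n / (2*(n:ℝ)+1)

lemma abs_cS_le_one (n : ℕ) : |cS n| ≤ 1 := by
  rw [cS, abs_div]
  have h1 : (0:ℝ) < 2*(n:ℝ)+1 := by positivity
  rw [abs_of_pos h1, div_le_one h1]
  calc |dcoef n| ≤ 1 := abs_dcoef_le_one n
    _ ≤ 2*(n:ℝ)+1 := by linarith [Nat.cast_nonneg (α := ℝ) n]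

lemma cS_mul (n : ℕ) : cS n * (2*(n:ℝ)+1) = dcoef n := by
  rw [cS]; field_simp

noncomputable def Sfn (y : ℝ) : ℝ := ∑' n : ℕ, cS n * y^(2*n+1)

lemma summable_S {y : ℝ} (hy : |y| < 1) : Summable (fun n : ℕ => cS n * y^(2*n+1)) := by
  have hgeo : Summable (fun n : ℕ => (|y|^2)^n * |y|) :=
    (summable_geometric_of_lt_one (by positivity)
      (by nlinarith [abs_nonneg y])).mul_right _
  apply Summable.of_norm_bounded hgeo
  intro n
  rw [Real.norm_eq_abs, abs_mul, abs_pow]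
  calc |cS n| * |y|^(2*n+1) ≤ 1 * |y|^(2*n+1) :=
        mul_le_mul_of_nonneg_right (abs_cS_le_one n) (by positivity)
    _ = (|y|^2)^n * |y| := by rw [one_mul, ← pow_mul, pow_succ]

lemma hasDerivAt_Sfn {y : ℝ} (hy : |y| < 1) : HasDerivAt Sfn (sfun (y^2)) y := by
  set r : ℝ := (1 + |y|) / 2 with hr
  have hr0 : (0:ℝ) < r := by positivity
  have hr1 : r < 1 := by rw [hr]; linarith
  have hyr : |y| < r := by rw [hr]; linarith
  have hu : Summable (fun n : ℕ => (r^2)^n) :=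
    summable_geometric_of_lt_one (by positivity) (by nlinarith)
  have hpow : ∀ (n : ℕ) (z : ℝ), HasDerivAt (fun w => cS n * w^(2*n+1)) (dcoef n * z^(2*n)) z := by
    intro n z
    have h := (hasDerivAt_pow (2*n+1) z).const_mul (cS n)
    refine h.congr_deriv ?_
    have : 2*n+1-1 = 2*n := by omega
    rw [this, ← mul_assoc, mul_comm (cS n) _]
    push_cast
    rw [mul_comm ((2:ℝ)*n+1) (cS n), cS_mul]
  have key := hasDerivAt_tsum_of_isPreconnected hu Metric.isOpen_ball
    (convex_ball (0:ℝ) r).isPreconnected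
    (g := fun n z => cS n * z^(2*n+1))
    (g' := fun n z => dcoef n * z^(2*n))
    (fun n z _ => hpow n z)
    (fun n z hz => by
      have hz' : |z| < r := by simpa [Real.dist_eq] using hz
      rw [Real.norm_eq_abs, abs_mul, abs_pow]
      calc |dcoef n| * |z|^(2*n) ≤ 1 * r^(2*n) := by
            apply mul_le_mul (abs_dcoef_le_one n)
              (pow_le_pow_left₀ (abs_nonneg z) hz'.le _) (by positivity) (by norm_num)
        _ = (r^2)^n := by rw [one_mul, ← pow_mul])
    (y₀ := y) (by simpa [Real.dist_eq] using hyr)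
    (summable_S hy)
    (by simpa [Real.dist_eq] using hyr)
  have heq : (∑' n : ℕ, dcoef n * y^(2*n)) = sfun (y^2) := by
    rw [sfun]
    exact tsum_congr fun n => by rw [← pow_mul, mul_comm 2 n]
  rw [← heq]
  exact key

lemma Sfn_zero : Sfn 0 = 0 := by
  rw [Sfn]
  have : ∀ n : ℕ, cS n * (0:ℝ)^(2*n+1) = 0 := fun n => by
    rw [zero_pow (by omega : 2*n+1 ≠ 0), mul_zero]
  rw [tsum_congr this, tsum_zero]

lemma Sfn_eq_arsinh {y : ℝ} (hy : |y| < 1) : Sfn y = Real.arsinh y := by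
  have hF : ∀ z : ℝ, |z| < 1 → HasDerivAt (fun w => Sfn w - Real.arsinh w) 0 z := by
    intro z hz
    have h := (hasDerivAt_Sfn hz).sub (Real.hasDerivAt_arsinh z)
    have hval : sfun (z^2) - (Real.sqrt (1 + z^2))⁻¹ = 0 := by
      rw [sfun_eq (by positivity) (by nlinarith [abs_nonneg z, sq_abs z])]
      ring
    rwa [hval] at h
  have hy1 : y < 1 := lt_of_le_of_lt (le_abs_self y) hy
  have hy2 : -1 < y := neg_lt_of_abs_lt hy
  rcases le_or_gt 0 y with h0 | h0
  · have hconst := constant_of_has_deriv_right_zero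
      (f := fun w => Sfn w - Real.arsinh w)
      (a := 0) (b := y)
      (fun z hz => by
        have : |z| < 1 := by rw [abs_lt]; exact ⟨by linarith [hz.1], by linarith [hz.2, hy1]⟩
        exact (hF z this).continuousAt.continuousWithinAt)
      (fun z hz => by
        have : |z| < 1 := by rw [abs_lt]; exact ⟨by linarith [hz.1], by linarith [hz.2.le, hy1]⟩
        exact (hF z this).hasDerivWithinAt)
    have := hconst y (Set.right_mem_Icc.mpr h0)
    simp only [Sfn_zero, Real.arsinh_zero, sub_zero] at this
    linarith [this]
  · have hy' : -1 < y := by rw [abs_lt] at hy; exact hy.1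
    have hconst := constant_of_has_deriv_right_zero
      (f := fun w => Sfn w - Real.arsinh w)
      (a := y) (b := 0)
      (fun z hz => by
        have : |z| < 1 := by rw [abs_lt]; exact ⟨by linarith [hz.1, hy2], by linarith [hz.2]⟩
        exact (hF z this).continuousAt.continuousWithinAt)
      (fun z hz => by
        have : |z| < 1 := by rw [abs_lt]; exact ⟨by linarith [hz.1, hy2], by linarith [hz.2]⟩
        exact (hF z this).hasDerivWithinAt)
    have := hconst 0 (Set.right_mem_Icc.mpr h0.le)
    simp only [Sfn_zero, Real.arsinh_zero, sub_zero] at this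
    linarith [this]

lemma D_eq (n : ℕ) : ∏ i ∈ range n, (2*(i:ℝ)+1) = (2*n).factorial / (2^n * n.factorial) := by
  induction n with
  | zero => simp
  | succ n ih =>
    rw [prod_range_succ, ih]
    have h1 : 2*(n+1) = (2*n+1)+1 := by ring
    rw [h1]
    simp only [Nat.factorial_succ]
    have h2 : ((2*n).factorial : ℝ) ≠ 0 := by positivity
    have h3 : ((n).factorial : ℝ) ≠ 0 := by positivity
    push_cast
    field_simp
    ring

lemma prod_eval (n : ℕ) :
    ∏ a ∈ range (2*n), ((((2*n : ℕ):ℝ)+1)/2 - ((a:ℝ)+1))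
      = (-1)^n * (∏ i ∈ range n, (2*(i:ℝ)+1))^2 / 4^n := by
  have hfac : ∀ a ∈ range (2*n), (((2*n : ℕ):ℝ)+1)/2 - ((a:ℝ)+1)
      = (2*(n:ℝ) - 1 - 2*(a:ℝ)) / 2 := by
    intro a _
    push_cast
    ring
  rw [prod_congr rfl hfac, prod_div_distrib, prod_const, card_range]
  have hsplit : (2*n) = n + n := by ring
  rw [hsplit, prod_range_add]
  have h1 : ∏ a ∈ range n, (2*(n:ℝ) - 1 - 2*(a:ℝ)) = ∏ i ∈ range n, (2*(i:ℝ)+1) := by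
    rw [← prod_range_reflect (fun j => 2*(j:ℝ)+1) n]
    apply prod_congr rfl
    intro a ha
    have halt : a < n := mem_range.mp ha
    have : ((n - 1 - a : ℕ) : ℝ) = (n:ℝ) - 1 - (a:ℝ) := by
      have : n - 1 - a = n - (1 + a) := by omega
      rw [this, Nat.cast_sub (by omega)]
      push_cast; ring
    rw [this]; ring
  have h2 : ∏ a ∈ range n, (2*(n:ℝ) - 1 - 2*((n + a : ℕ):ℝ))
      = (-1)^n * ∏ i ∈ range n, (2*(i:ℝ)+1) := by
    have : ∀ a ∈ range n, (2*(n:ℝ) - 1 - 2*((n + a : ℕ):ℝ)) = (-1) * (2*(a:ℝ)+1) := by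
      intro a _; push_cast; ring
    rw [prod_congr rfl this, prod_mul_distrib, prod_const, card_range]
  rw [h1, h2]
  have h4 : (2:ℝ)^(n+n) = 4^n := by
    rw [← two_mul, pow_mul]; norm_num
  rw [h4]
  ring

lemma term_even (x : ℝ) (n : ℕ) :
    x ^ (2*n + 1) / (2*n + 1).factorial *
        ∏ a ∈ Finset.range (2*n), ((((2*n : ℕ) : ℝ) + 1) / 2 - ((a : ℝ) + 1))
      = 2 * (cS n * (x/2)^(2*n+1)) := by
  rw [prod_eval, D_eq]
  have hc : (Nat.centralBinom n : ℝ) = ((2*n).factorial : ℝ) / ((n.factorial : ℝ))^2 := by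
    have h := Nat.choose_mul_factorial_mul_factorial (by omega : n ≤ 2*n)
    have h2 : 2*n - n = n := by omega
    rw [h2] at h
    have hcast : ((Nat.choose (2*n) n : ℕ) : ℝ) * (n.factorial : ℝ) * (n.factorial : ℝ)
        = ((2*n).factorial : ℝ) := by exact_mod_cast congrArg Nat.cast h
    have hfn : ((n.factorial : ℕ) : ℝ) ≠ 0 := by positivity
    rw [Nat.centralBinom]
    field_simp
    linear_combination hcast
  have hfact : (((2*n+1).factorial : ℕ) : ℝ) = (2*(n:ℝ)+1) * ((2*n).factorial : ℝ) := by
    rw [Nat.factorial_succ]; push_cast; ring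
  rw [cS, dcoef, hc, hfact]
  have h1 : ((2*n).factorial : ℝ) ≠ 0 := by positivity
  have h2 : ((n.factorial : ℕ) : ℝ) ≠ 0 := by positivity
  have h3 : (2*(n:ℝ)+1) ≠ 0 := by positivity
  have h5 : (x/2)^(2*n+1) = x^(2*n+1) / 2^(2*n+1) := div_pow x 2 (2*n+1)
  rw [h5]
  have h6 : (2:ℝ)^(2*n+1) = 2 * 4^n := by
    rw [pow_succ, pow_mul]; norm_num; ring
  rw [h6]
  field_simp
  have e3 : ((2:ℝ)^n)^2 = 4^n := by
    rw [← pow_mul, show (4:ℝ) = 2^2 from by norm_num, ← pow_mul, mul_comm]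
  rw [e3]

lemma term_odd (x : ℝ) (m : ℕ) :
    x ^ (2*m+1 + 1) / (2*m+1 + 1).factorial *
        ∏ a ∈ Finset.range (2*m+1), ((((2*m+1 : ℕ) : ℝ) + 1) / 2 - ((a : ℝ) + 1)) = 0 := by
  have hz : ((((2*m+1 : ℕ) : ℝ) + 1) / 2 - ((m : ℝ) + 1)) = 0 := by push_cast; ring
  rw [Finset.prod_eq_zero (Finset.mem_range.mpr (by omega : m < 2*m+1)) hz, mul_zero]

theorem phi_half_eq_arsinh (x : ℝ) (hx : |x| < 2) :
    (∑' k : ℕ, x ^ (k + 1) / (k + 1).factorial *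
        ∏ a ∈ Finset.range k, (((k : ℝ) + 1) / 2 - ((a : ℝ) + 1))) =
      2 * Real.arsinh (x / 2) := by
  have hy : |x/2| < 1 := by
    rw [abs_div, abs_of_pos (by norm_num : (0:ℝ) < 2)]
    linarith
  set f : ℕ → ℝ := fun k => x ^ (k + 1) / (k + 1).factorial *
        ∏ a ∈ Finset.range k, (((k : ℝ) + 1) / 2 - ((a : ℝ) + 1)) with hf
  have hinj : Function.Injective (fun n : ℕ => 2*n) := fun a b h => by dsimp only at h; omega
  have hsupp : Function.support f ⊆ Set.range (fun n : ℕ => 2*n) := by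
    intro k hk
    rcases Nat.even_or_odd k with ⟨m, hm⟩ | ⟨m, hm⟩
    · exact ⟨m, by dsimp only; omega⟩
    · exfalso
      apply hk
      rw [hf]
      simp only
      rw [hm]
      exact term_odd x m
  rw [← hinj.tsum_eq hsupp]
  have hterm : ∀ n : ℕ, f ((fun n : ℕ => 2*n) n) = 2 * (cS n * (x/2)^(2*n+1)) := by
    intro n
    rw [hf]
    exact term_even x n
  rw [tsum_congr hterm, tsum_mul_left, ← Sfn, Sfn_eq_arsinh hy]
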